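/- For 0 < q < 1 and any integer m ≥ 1, the total backward jump rate satisfies ∑_{j'=0}^{m-1} ψ•_{q,0}(j'|m) = m, where ψ•_{q,0}(j'|m) = 1/(1-q^{m-j'}) · (q;q)_m/(q;q)_{j'}. -/
import Mathlib


open Finset

/-- The q-Pochhammer symbol `(x;q)_k = ∏_{i=0}^{k-1} (1 - q^i x)`. -/
noncomputable def qPoch (q x : ℝ) (k : ℕ) : ℝ := ∏ i ∈ Finset.range k, (1 - q ^ i * x)

/-- The rate `ψ•_{q,ν}(j'|m) = 1/(1-q^{m-j'}) · (q;q)_m (ν;q)_{j'}/((q;q)_{j'} (ν;q)_m)`;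
at `ν = 0` this is `1/(1-q^{m-j'}) · (q;q)_m/(q;q)_{j'}`. -/
noncomputable def qHahnPsiDot (q ν : ℝ) (j m : ℕ) : ℝ :=
  1 / (1 - q ^ (m - j)) * (qPoch q q m * qPoch q ν j) / (qPoch q q j * qPoch q ν m)

lemma qPoch_zero_x (q : ℝ) (k : ℕ) : qPoch q 0 k = 1 := by
  simp [qPoch]

lemma qPoch_succ (q : ℝ) (k : ℕ) :
    qPoch q q (k + 1) = qPoch q q k * (1 - q ^ (k + 1)) := by
  rw [qPoch, Finset.prod_range_succ, ← qPoch, pow_succ]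

lemma qPoch_pos {q : ℝ} (hq0 : 0 < q) (hq1 : q < 1) (k : ℕ) : 0 < qPoch q q k := by
  apply Finset.prod_pos
  intro i _
  have : q ^ i * q < 1 := by
    rw [← pow_succ]
    exact pow_lt_one₀ hq0.le hq1 (Nat.succ_ne_zero i)
  linarith

/-- Key lemma: `∑_{k=0}^{m} q^k (q;q)_m/(q;q)_k = 1`. -/
lemma qPoch_sum_one {q : ℝ} (hq0 : 0 < q) (hq1 : q < 1) (m : ℕ) :
    ∑ k ∈ Finset.range (m + 1), q ^ k * (qPoch q q m / qPoch q q k) = 1 := by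
  induction m with
  | zero => simp [qPoch]
  | succ m ih =>
    rw [Finset.sum_range_succ]
    have h1 : ∀ k ∈ Finset.range (m + 1),
        q ^ k * (qPoch q q (m + 1) / qPoch q q k)
          = (1 - q ^ (m + 1)) * (q ^ k * (qPoch q q m / qPoch q q k)) := by
      intro k _
      rw [qPoch_succ]
      ring
    rw [Finset.sum_congr rfl h1, ← Finset.mul_sum, ih,
      div_self (qPoch_pos hq0 hq1 (m + 1)).ne']
    ring

/-- The total backward q-TASEP jump rate: `∑_{j'=0}^{m-1} ψ•_{q,0}(j'|m) = m`. -/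
theorem qHahnPsiDot_total_rate (q : ℝ) (hq0 : 0 < q) (hq1 : q < 1) (m : ℕ) (hm : 1 ≤ m) :
    ∑ j ∈ Finset.range m, qHahnPsiDot q 0 j m = (m : ℝ) := by
  clear hm
  induction m with
  | zero => simp [qPoch]
  | succ m ih =>
    have hPne : ∀ k, qPoch q q k ≠ 0 := fun k => (qPoch_pos hq0 hq1 k).ne'
    -- per-term identity
    have key : ∀ j ∈ Finset.range m,
        qHahnPsiDot q 0 (j + 1) (m + 1)
          = qHahnPsiDot q 0 j m + q ^ (j + 1) * (qPoch q q m / qPoch q q (j + 1)) := by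
      intro j hj
      rw [Finset.mem_range] at hj
      obtain ⟨d, hd⟩ : ∃ d, m = j + d + 1 := ⟨m - j - 1, by omega⟩
      subst hd
      have e1 : j + d + 1 + 1 - (j + 1) = d + 1 := by omega
      have e2 : j + d + 1 - j = d + 1 := by omega
      simp only [qHahnPsiDot, qPoch_zero_x, mul_one, e1, e2]
      have hq' : (1 : ℝ) - q ^ (d + 1) ≠ 0 := by
        have : q ^ (d + 1) < 1 := pow_lt_one₀ hq0.le hq1 (Nat.succ_ne_zero d)
        linarith
      have hP1 := hPne (j + 1)
      have hP2 := hPne j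
      have hP3 := hPne (j + d + 1)
      have hs1 : qPoch q q (j + d + 1 + 1) = qPoch q q (j + d + 1) * (1 - q ^ (j + d + 1 + 1)) :=
        qPoch_succ q (j + d + 1)
      have hs2 : qPoch q q (j + 1) = qPoch q q j * (1 - q ^ (j + 1)) := qPoch_succ q j
      rw [hs1, hs2]
      have hq'' : (1 : ℝ) - q ^ (j + 1) ≠ 0 := by
        have : q ^ (j + 1) < 1 := pow_lt_one₀ hq0.le hq1 (Nat.succ_ne_zero j)
        linarith
      field_simp
      ring
    -- split off j = 0
    rw [Finset.sum_range_succ']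
    rw [Finset.sum_congr rfl key, Finset.sum_add_distrib, ih]
    have h0 : qHahnPsiDot q 0 0 (m + 1) = qPoch q q m := by
      simp only [qHahnPsiDot, qPoch_zero_x, mul_one, Nat.sub_zero]
      have hq' : (1 : ℝ) - q ^ (m + 1) ≠ 0 := by
        have : q ^ (m + 1) < 1 := pow_lt_one₀ hq0.le hq1 (Nat.succ_ne_zero m)
        linarith
      rw [qPoch_succ]
      have : qPoch q q 0 = 1 := by simp [qPoch]
      rw [this]
      field_simp
    rw [h0]
    have hV := qPoch_sum_one hq0 hq1 m
    rw [Finset.sum_range_succ'] at hV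
    have h00 : q ^ 0 * (qPoch q q m / qPoch q q 0) = qPoch q q m := by
      simp [qPoch]
    rw [h00] at hV
    push_cast
    linarith
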